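/- arXiv:1206.5675 — 2 statements merged into one kernel-verified Lean document; each statement's English description precedes it below -/
import Mathlib

section
/- Let p be an odd prime and V the ring of integers of a finite extension of Q_p. Then V contains a primitive p-th root of unity if and only if V contains a root of x^{p-1} + p, i.e. a (p-1)-th root of -p. -/
open Polynomial Finset

section Ultra
variable {K : Type*} [NormedField K] {V : Subring K} (hV : ∀ x : K, x ∈ V ↔ ‖x‖ ≤ 1)
include hV

theorem my_ultra (x y : K) : ‖x + y‖ ≤ max ‖x‖ ‖y‖ := by
  wlog h : ‖x‖ ≤ ‖y‖ generalizing x y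
  · rw [add_comm, max_comm]; exact this y x (le_of_not_ge h)
  rcases eq_or_ne y 0 with rfl | hy
  · simp
  have hx : x / y ∈ V := (hV _).2 (by
    rw [norm_div]; exact div_le_one_of_le₀ h (norm_nonneg _))
  have h1 : x / y + 1 ∈ V := V.add_mem hx V.one_mem
  have : ‖x + y‖ = ‖x / y + 1‖ * ‖y‖ := by
    rw [← norm_mul, add_mul, div_mul_cancel₀ _ hy, one_mul]
  rw [this, max_eq_right h]
  calc ‖x / y + 1‖ * ‖y‖ ≤ 1 * ‖y‖ := by
        gcongr; exact (hV _).1 h1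
    _ = ‖y‖ := one_mul _

theorem my_norm_add_eq {x y : K} (h : ‖y‖ < ‖x‖) : ‖x + y‖ = ‖x‖ := by
  refine le_antisymm ((my_ultra hV x y).trans (by simp [h.le])) ?_
  have h2 : ‖x‖ ≤ max ‖x + y‖ ‖y‖ := by
    simpa using my_ultra hV (x + y) (-y)
  rcases max_cases ‖x + y‖ ‖y‖ with ⟨he, _⟩ | ⟨he, _⟩
  · rw [he] at h2; exact h2
  · rw [he] at h2; linarith

theorem my_norm_sum_le {ι : Type*} (s : Finset ι) (f : ι → K) {r : ℝ} (hr : 0 ≤ r)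
    (h : ∀ i ∈ s, ‖f i‖ ≤ r) : ‖∑ i ∈ s, f i‖ ≤ r := by
  classical
  induction s using Finset.induction with
  | empty => simpa using hr
  | @insert a s hx ih =>
    rw [Finset.sum_insert hx]
    refine (my_ultra hV _ _).trans (max_le (h a (by simp)) (ih fun i hi => h i (by simp [hi])))

theorem my_norm_prod_sub_prod_le {ι : Type*} (s : Finset ι) (f g : ι → K) {r : ℝ} (hr : 0 ≤ r)
    (hf : ∀ i ∈ s, ‖f i‖ ≤ 1) (hg : ∀ i ∈ s, ‖g i‖ ≤ 1)
    (h : ∀ i ∈ s, ‖f i - g i‖ ≤ r) : ‖∏ i ∈ s, f i - ∏ i ∈ s, g i‖ ≤ r := by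
  classical
  induction s using Finset.induction with
  | empty => simpa using hr
  | @insert a s hx ih =>
    rw [Finset.prod_insert hx, Finset.prod_insert hx]
    have key : f a * ∏ i ∈ s, f i - g a * ∏ i ∈ s, g i
        = f a * (∏ i ∈ s, f i - ∏ i ∈ s, g i) + (f a - g a) * ∏ i ∈ s, g i := by ring
    rw [key]
    refine (my_ultra hV _ _).trans (max_le ?_ ?_)
    · rw [norm_mul]
      calc ‖f a‖ * ‖∏ i ∈ s, f i - ∏ i ∈ s, g i‖ ≤ 1 * r := by
            refine mul_le_mul (hf a (by simp)) (ih (fun i hi => hf i (by simp [hi]))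
              (fun i hi => hg i (by simp [hi])) (fun i hi => h i (by simp [hi])))
              (norm_nonneg _) zero_le_one
        _ = r := one_mul r
    · rw [norm_mul]
      calc ‖f a - g a‖ * ‖∏ i ∈ s, g i‖ ≤ r * 1 := by
            refine mul_le_mul (h a (by simp)) ?_ (norm_nonneg _) hr
            rw [norm_prod]
            exact Finset.prod_le_one (fun i _ => norm_nonneg _) (fun i hi => hg i (by simp [hi]))
        _ = r := mul_one r

end Ultra
section Hensel
variable {K : Type*} [NormedField K] [CompleteSpace K] {V : Subring K}
  (hV : ∀ x : K, x ∈ V ↔ ‖x‖ ≤ 1)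
include hV

/-- Hensel's lemma for simple roots in the unit ball of a complete normed field
whose unit ball is a subring. -/
theorem my_hensel (f : K[X]) (hf : ∀ n, ‖f.coeff n‖ ≤ 1) (a : K) (ha : ‖a‖ ≤ 1)
    (hfa : ‖f.eval a‖ < 1) (hfd : ‖f.derivative.eval a‖ = 1) :
    ∃ b : K, ‖b‖ ≤ 1 ∧ f.eval b = 0 ∧ ‖b - a‖ < 1 := by
  classical
  -- the polynomial with coefficients in V
  have hsub : (↑f.coeffs : Set K) ⊆ V := by
    intro c hc
    obtain ⟨n, _, rfl⟩ := Polynomial.mem_coeffs_iff.1 (Finset.mem_coe.1 hc)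
    exact (hV _).2 (hf n)
  set F : Polynomial V := f.toSubring V hsub with hF
  have hmap : F.map (Subring.subtype V) = f := Polynomial.map_toSubring f V hsub
  have hevF : ∀ x : V, ((F.eval x : V) : K) = f.eval (x : K) := by
    intro x
    conv_rhs => rw [← hmap]
    rw [Polynomial.eval_map]
    exact (Polynomial.eval₂_at_apply (Subring.subtype V) x).symm
  have hevF' : ∀ x : V, ((F.derivative.eval x : V) : K) = f.derivative.eval (x : K) := by
    intro x
    conv_rhs => rw [← hmap]
    rw [Polynomial.derivative_map, Polynomial.eval_map]
    exact (Polynomial.eval₂_at_apply (Subring.subtype V) x).symm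
  set a' : V := ⟨a, (hV a).2 ha⟩ with ha'
  set T : ℝ := ‖f.eval a‖ with hT
  have hT0 : 0 ≤ T := norm_nonneg _
  have hT1 : T < 1 := hfa
  -- Newton iteration step
  set step : V → V := fun x =>
    if h : ‖((F.eval x : V) : K) / ((F.derivative.eval x : V) : K)‖ ≤ 1 then
      x - ⟨_, (hV _).2 h⟩ else x with hstep
  set b : ℕ → V := fun n => step^[n] a' with hb
  have hb0 : b 0 = a' := rfl
  have hbs : ∀ n, b (n + 1) = step (b n) := by
    intro n
    show step^[n+1] a' = step (step^[n] a')
    exact Function.iterate_succ_apply' step n a'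
  -- the invariant
  have inv : ∀ n, ‖((b n : K)) - a‖ ≤ T ∧ ‖f.derivative.eval ((b n : K))‖ = 1 ∧
      ‖f.eval ((b n : K))‖ ≤ T ^ (n + 1) := by
    intro n
    induction n with
    | zero => exact ⟨by simpa [hb0, ha'] using hT0, by simpa [hb0] using hfd, by simp [hb0, hT, ha']⟩
    | succ n ih =>
      obtain ⟨ih1, ih2, ih3⟩ := ih
      have hTn : T ^ (n + 1) ≤ T := by
        calc T ^ (n + 1) ≤ T ^ 1 := pow_le_pow_of_le_one hT0 hT1.le (by omega)
          _ = T := pow_one T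
      set x : V := b n with hx
      have hq : ‖((F.eval x : V) : K) / ((F.derivative.eval x : V) : K)‖ ≤ 1 := by
        rw [hevF, hevF', norm_div, ih2, div_one]
        exact ih3.trans (hTn.trans hT1.le)
      have hbn1 : b (n + 1) = x - ⟨_, (hV _).2 hq⟩ := by
        rw [hbs n, hstep]; exact dif_pos hq
      set q : K := ((F.eval x : V) : K) / ((F.derivative.eval x : V) : K) with hqdef
      have hqnorm : ‖q‖ ≤ T ^ (n + 1) := by
        rw [hqdef, hevF, hevF', norm_div, ih2, div_one]; exact ih3
      have hd0 : ((F.derivative.eval x : V) : K) ≠ 0 := by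
        rw [hevF']; intro h0; rw [h0] at ih2; simp at ih2
      have hmul : ((F.derivative.eval x : V) : K) * q = ((F.eval x : V) : K) := by
        rw [hqdef, mul_div_cancel₀ _ hd0]
      -- binomial expansion in V
      obtain ⟨k, hk⟩ := F.binomExpansion x (-⟨q, (hV _).2 (hqnorm.trans (hTn.trans hT1.le))⟩)
      have hco : ((b (n+1) : K)) = (x : K) - q := by rw [hbn1]; rfl
      have hxq : x + -⟨q, (hV _).2 (hqnorm.trans (hTn.trans hT1.le))⟩ = b (n + 1) := by
        rw [hbn1]; exact (sub_eq_add_neg _ _).symm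
      have heval : f.eval ((b (n+1) : K)) = (k : K) * q ^ 2 := by
        have := congrArg (fun z : V => (z : K)) hk
        rw [hxq] at this
        push_cast at this
        rw [hevF, hevF, hevF'] at this
        rw [this]
        rw [← hevF, ← hevF']
        rw [mul_neg, hmul]
        ring
      refine ⟨?_, ?_, ?_⟩
      · -- distance to a
        have : ((b (n+1) : K)) - a = ((x : K) - a) + (-q) := by rw [hco]; ring
        rw [this]
        refine (my_ultra hV _ _).trans (max_le ih1 ?_)
        rw [norm_neg]; exact hqnorm.trans hTn
      · -- derivative norm
        obtain ⟨z, hz⟩ := (F.derivative).evalSubFactor (b (n+1)) a'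
        have hzK : f.derivative.eval ((b (n+1) : K)) - f.derivative.eval a
            = (z : K) * (((b (n+1) : K)) - a) := by
          have := congrArg (fun w : V => (w : K)) hz
          push_cast at this
          rw [hevF', hevF'] at this
          exact this
        have hdist : ‖f.derivative.eval ((b (n+1) : K)) - f.derivative.eval a‖ < 1 := by
          rw [hzK, norm_mul]
          calc ‖(z : K)‖ * ‖((b (n+1) : K)) - a‖ ≤ 1 * T := by
                refine mul_le_mul ((hV _).1 z.2) ?_ (norm_nonneg _) zero_le_one
                have : ((b (n+1) : K)) - a = ((x : K) - a) + (-q) := by rw [hco]; ring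
                rw [this]
                refine (my_ultra hV _ _).trans (max_le ih1 ?_)
                rw [norm_neg]; exact hqnorm.trans hTn
            _ = T := one_mul T
            _ < 1 := hT1
        have : f.derivative.eval ((b (n+1) : K)) =
            f.derivative.eval a + (f.derivative.eval ((b (n+1) : K)) - f.derivative.eval a) := by
          ring
        rw [this, my_norm_add_eq hV (by rw [hfd]; exact hdist), hfd]
      · -- eval norm
        rw [heval, norm_mul, norm_pow]
        calc ‖(k : K)‖ * ‖q‖ ^ 2 ≤ 1 * (T ^ (n+1)) ^ 2 := by
              refine mul_le_mul ((hV _).1 k.2) (pow_le_pow_left₀ (norm_nonneg _) hqnorm 2)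
                (by positivity) zero_le_one
          _ = T ^ (2 * n + 2) := by rw [one_mul, ← pow_mul]; ring_nf
          _ ≤ T ^ (n + 1 + 1) := pow_le_pow_of_le_one hT0 hT1.le (by omega)
  -- Cauchy sequence
  have hdist : ∀ n, dist ((b n : K)) ((b (n+1) : K)) ≤ T * T ^ n := by
    intro n
    obtain ⟨_, h2, h3⟩ := inv n
    rcases le_or_gt ‖((F.eval (b n) : V) : K) / ((F.derivative.eval (b n) : V) : K)‖ 1 with hq | hq
    · have hbn1 : b (n + 1) = b n - ⟨_, (hV _).2 hq⟩ := by
        rw [hbs n, hstep]; simp only [dif_pos hq]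
      rw [dist_eq_norm, hbn1]
      push_cast
      have : (b n : K) - ((b n : K) - (((F.eval (b n) : V) : K) / ((F.derivative.eval (b n) : V) : K)))
          = ((F.eval (b n) : V) : K) / ((F.derivative.eval (b n) : V) : K) := by ring
      rw [this, norm_div, hevF, hevF', h2, div_one]
      calc ‖f.eval ((b n : K))‖ ≤ T ^ (n + 1) := h3
        _ = T * T ^ n := by ring
    · exfalso
      rw [hevF, hevF', norm_div, h2, div_one] at hq
      have h4 : ‖f.eval ((b n : K))‖ ≤ 1 := h3.trans (pow_le_one₀ hT0 hT1.le)
      linarith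
  have hcauchy : CauchySeq (fun n => ((b n : K))) :=
    cauchySeq_of_le_geometric T T hT1 hdist
  obtain ⟨c, hc⟩ := cauchySeq_tendsto_of_complete hcauchy
  have hca : ‖c - a‖ ≤ T := by
    have h1 : Filter.Tendsto (fun n => ‖((b n : K)) - a‖) Filter.atTop (nhds ‖c - a‖) :=
      ((continuous_norm.comp (continuous_id.sub continuous_const)).continuousAt.tendsto.comp hc)
    exact le_of_tendsto h1 (Filter.Eventually.of_forall fun n => (inv n).1)
  refine ⟨c, ?_, ?_, hca.trans_lt hT1⟩
  · have : c = (c - a) + a := by ring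
    rw [this]
    exact (my_ultra hV _ _).trans (max_le (hca.trans hT1.le) ha)
  · have h1 : Filter.Tendsto (fun n => f.eval ((b n : K))) Filter.atTop (nhds (f.eval c)) :=
      (f.continuous_aeval.continuousAt.tendsto.comp hc)
    have h2 : Filter.Tendsto (fun n => f.eval ((b n : K))) Filter.atTop (nhds 0) := by
      apply squeeze_zero_norm (fun n => (inv n).2.2)
      have := tendsto_pow_atTop_nhds_zero_of_lt_one hT0 hT1
      simpa [pow_succ'] using this.const_mul T
    exact tendsto_nhds_unique h1 h2

end Hensel
section Directions
variable {K : Type*} [NormedField K] [CompleteSpace K] {V : Subring K}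
  (hV : ∀ x : K, x ∈ V ↔ ‖x‖ ≤ 1)
include hV

theorem dir_zeta_to_xi (p : ℕ) [Fact p.Prime] (hodd : Odd p)
    (hp_norm : ‖(p : K)‖ = (p : ℝ)⁻¹)
    (ζ : K) (hζV : ζ ∈ V) (hζp : ζ ^ p = 1) (hζ1 : ζ ≠ 1) :
    ∃ ξ ∈ V, ξ ^ (p - 1) = -(p : K) := by
  classical
  have hp : p.Prime := Fact.out
  have hp2 : 2 ≤ p := hp.two_le
  have hp3 : 3 ≤ p := by
    rcases Nat.lt_or_ge p 3 with h | h
    · interval_cases p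
      exact absurd hodd (by decide)
    · exact h
  have hpR : (2 : ℝ) ≤ (p : ℝ) := by exact_mod_cast hp2
  have hpinv_lt : (p : ℝ)⁻¹ < 1 := by
    rw [inv_lt_one_iff₀]; right; linarith
  have hpK_lt : ‖(p : K)‖ < 1 := by rw [hp_norm]; exact hpinv_lt
  -- norm of ζ is 1
  have h1 : ‖ζ‖ ^ p = 1 := by rw [← norm_pow, hζp, norm_one]
  have hζn : ‖ζ‖ = 1 := by
    by_contra h
    rcases lt_or_gt_of_ne h with hlt | hgt
    · have := pow_lt_one₀ (norm_nonneg ζ) hlt (by omega : p ≠ 0)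
      rw [h1] at this; exact lt_irrefl 1 this
    · have := one_lt_pow₀ hgt (by omega : p ≠ 0)
      rw [h1] at this; exact lt_irrefl 1 this
  have hπ0 : ζ - 1 ≠ 0 := sub_ne_zero.2 hζ1
  -- ζ is a primitive p-th root of unity
  have hord : orderOf ζ = p := by
    rcases hp.eq_one_or_self_of_dvd _ (orderOf_dvd_of_pow_eq_one hζp) with h | h
    · exact absurd (orderOf_eq_one_iff.1 h) hζ1
    · exact h
  have hprim : IsPrimitiveRoot ζ p := hord ▸ IsPrimitiveRoot.orderOf ζ
  -- the factorization of X^p - 1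
  have e1 : nthRoots p (1 : K) = (Multiset.range p).map fun i => ζ ^ i * 1 :=
    hprim.nthRoots_eq (one_pow p)
  have hmon : ((X : K[X]) ^ p - C 1).Monic := monic_X_pow_sub_C 1 (by omega)
  have hcard : Multiset.card ((X : K[X]) ^ p - C 1).roots = ((X : K[X]) ^ p - C 1).natDegree := by
    rw [natDegree_X_pow_sub_C]
    show Multiset.card (nthRoots p (1 : K)) = p
    rw [e1]
    simp
  have key0 := prod_multiset_X_sub_C_of_monic_of_roots_card_eq hmon hcard
  have key : (((Multiset.range p).map fun i => ζ ^ i * 1).map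
      fun a => (X : K[X]) - C a).prod = X ^ p - C 1 := by
    rw [← e1]
    exact key0
  rw [Multiset.map_map] at key
  have hroots : (X ^ p - 1 : K[X]) = ∏ i ∈ Finset.range p, (X - C (ζ ^ i)) := by
    have key' : (Multiset.map (fun i => (X : K[X]) - C (ζ ^ i)) (Multiset.range p)).prod
        = X ^ p - 1 := by
      simpa [Function.comp] using key
    rw [Finset.prod_eq_multiset_prod, Finset.range_val, key']
  -- split off the i = 0 factor and cancel X - 1
  have hsplit : ∏ i ∈ Finset.range p, ((X : K[X]) - C (ζ ^ i))
      = (X - 1) * ∏ i ∈ Finset.Ico 1 p, (X - C (ζ ^ i)) := by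
    rw [Finset.range_eq_Ico, Finset.prod_eq_prod_Ico_succ_bot (by omega : 0 < p)]
    simp
  have hgeom : (X ^ p - 1 : K[X]) = (X - 1) * ∑ k ∈ Finset.range p, (X : K[X]) ^ k := by
    rw [mul_comm, geom_sum_mul]
  have hA : ∏ i ∈ Finset.Ico 1 p, ((X : K[X]) - C (ζ ^ i))
      = ∑ k ∈ Finset.range p, (X : K[X]) ^ k := by
    have hX1 : ((X : K[X]) - 1) ≠ 0 := by
      have := X_sub_C_ne_zero (R := K) (1 : K)
      simpa using this
    apply mul_left_cancel₀ hX1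
    rw [← hsplit, ← hroots, hgeom]
  have hprod1 : ∏ i ∈ Finset.Ico 1 p, (1 - ζ ^ i) = (p : K) := by
    have := congrArg (Polynomial.eval 1) hA
    simpa [Polynomial.eval_prod, Polynomial.eval_finset_sum] using this
  -- the geometric sums
  set s : ℕ → K := fun i => ∑ j ∈ Finset.range i, ζ ^ j with hs
  have hs_mul : ∀ i, (ζ - 1) * s i = ζ ^ i - 1 := fun i => by
    rw [mul_comm]; exact geom_sum_mul ζ i
  have hsV : ∀ i, ‖s i‖ ≤ 1 := fun i =>
    my_norm_sum_le hV _ _ zero_le_one fun j _ => by rw [norm_pow, hζn, one_pow]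
  have hs1 : ∀ i ∈ Finset.Ico 1 p, ‖s i‖ = 1 := by
    intro i hi
    obtain ⟨hi1, hi2⟩ := Finset.mem_Ico.1 hi
    have hcop : Nat.Coprime i p :=
      (hp.coprime_iff_not_dvd.2 fun hdvd =>
        absurd (Nat.le_of_dvd (by omega) hdvd) (by omega)).symm
    have heuler : i ^ (p - 1) % p = 1 := by
      have h := Nat.ModEq.pow_totient hcop
      rw [Nat.totient_prime hp] at h
      have h2 : i ^ (p - 1) % p = 1 % p := h
      rwa [show 1 % p = 1 from Nat.mod_eq_of_lt (by omega)] at h2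
    have hzpow : (ζ ^ i) ^ (i ^ (p - 2)) = ζ := by
      rw [← pow_mul]
      have hmul : i * i ^ (p - 2) = i ^ (p - 1) := by
        rw [← pow_succ']
        congr 1
        omega
      rw [hmul, pow_eq_pow_mod _ hζp, heuler, pow_one]
    set s' : K := ∑ j ∈ Finset.range (i ^ (p - 2)), (ζ ^ i) ^ j with hs'
    have hs'ζ : s' * (ζ ^ i - 1) = ζ - 1 := by rw [hs', geom_sum_mul, hzpow]
    have hinv : s' * s i = 1 := by
      apply mul_left_cancel₀ hπ0
      rw [mul_one, show (ζ - 1) * (s' * s i) = s' * ((ζ - 1) * s i) by ring, hs_mul i, hs'ζ]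
    have hnorm1 : ‖s'‖ * ‖s i‖ = 1 := by rw [← norm_mul, hinv, norm_one]
    have hs'le : ‖s'‖ ≤ 1 :=
      my_norm_sum_le hV _ _ zero_le_one fun j _ => by
        rw [norm_pow, norm_pow, hζn, one_pow, one_pow]
    nlinarith [hsV i, norm_nonneg (s i), norm_nonneg s']
  set S : K := ∏ i ∈ Finset.Ico 1 p, s i with hSdef
  have hSnorm : ‖S‖ = 1 := by
    rw [hSdef, norm_prod]
    exact Finset.prod_eq_one fun i hi => hs1 i hi
  have heven : Even (p - 1) := Nat.Odd.sub_odd hodd odd_one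
  have hcardIco : (Finset.Ico 1 p).card = p - 1 := by rw [Nat.card_Ico]
  have hπS : (ζ - 1) ^ (p - 1) * S = (p : K) := by
    have hterm : ∀ i ∈ Finset.Ico 1 p, (1 - ζ ^ i) = (1 - ζ) * s i := fun i _ => by
      have := hs_mul i; linear_combination this
    rw [Finset.prod_congr rfl hterm, Finset.prod_mul_distrib, Finset.prod_const, hcardIco] at hprod1
    calc (ζ - 1) ^ (p - 1) * S = (-(1 - ζ)) ^ (p - 1) * S := by rw [neg_sub]
      _ = (1 - ζ) ^ (p - 1) * S := by rw [heven.neg_pow]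
      _ = (p : K) := hprod1
  have hπ_le : ‖ζ - 1‖ ≤ 1 := (hV _).1 (V.sub_mem hζV V.one_mem)
  have hπ_pow : ‖ζ - 1‖ ^ (p - 1) = (p : ℝ)⁻¹ := by
    have := congrArg norm hπS
    rwa [norm_mul, norm_pow, hSnorm, mul_one, hp_norm] at this
  have hπ_lt : ‖ζ - 1‖ < 1 := by
    by_contra h
    push_neg at h
    have h2 : (1 : ℝ) ≤ ‖ζ - 1‖ ^ (p - 1) := one_le_pow₀ h
    rw [hπ_pow] at h2
    have : (p : ℝ) ≤ 1 := by
      rw [← inv_inv (p : ℝ)]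
      exact inv_le_one_of_one_le₀ h2
    linarith
  -- Wilson's theorem
  have hwil : ‖((p - 1).factorial : K) + 1‖ ≤ (p : ℝ)⁻¹ := by
    have hzmod : (((p - 1).factorial + 1 : ℕ) : ZMod p) = 0 := by
      push_cast [ZMod.wilsons_lemma]
      ring
    obtain ⟨m, hm⟩ := (ZMod.natCast_eq_zero_iff _ _).1 hzmod
    have hcast : ((p - 1).factorial : K) + 1 = (p : K) * (m : K) := by
      have := congrArg (Nat.cast : ℕ → K) hm
      push_cast at this
      linear_combination this
    rw [hcast, norm_mul, hp_norm]
    calc (p : ℝ)⁻¹ * ‖(m : K)‖ ≤ (p : ℝ)⁻¹ * 1 := by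
          gcongr
          exact (hV _).1 (natCast_mem V m)
      _ = (p : ℝ)⁻¹ := mul_one _
  have hfacprod : ((p - 1).factorial : K) = ∏ i ∈ Finset.Ico 1 p, (i : K) := by
    rw [← Nat.cast_prod]
    congr 1
    rw [← Finset.prod_Ico_id_eq_factorial (p - 1), show p - 1 + 1 = p by omega]
  have hSdiff : ‖S - ((p - 1).factorial : K)‖ ≤ ‖ζ - 1‖ := by
    rw [hfacprod, hSdef]
    apply my_norm_prod_sub_prod_le hV _ _ _ (norm_nonneg _) (fun i _ => hsV i)
    · intro i _
      exact (hV _).1 (natCast_mem V i)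
    · intro i _
      have hexp : s i - (i : K) = (ζ - 1) * ∑ j ∈ Finset.range i, s j := by
        rw [Finset.mul_sum]
        have hKi : (i : K) = ∑ _j ∈ Finset.range i, (1 : K) := by simp
        rw [hKi, hs, ← Finset.sum_sub_distrib]
        exact Finset.sum_congr rfl fun j _ => by rw [← hs_mul j]
      rw [hexp, norm_mul]
      calc ‖ζ - 1‖ * ‖∑ j ∈ Finset.range i, s j‖ ≤ ‖ζ - 1‖ * 1 := by
            gcongr
            exact my_norm_sum_le hV _ _ zero_le_one fun j _ => hsV j
        _ = ‖ζ - 1‖ := mul_one _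
  have hS1 : ‖S + 1‖ < 1 := by
    have : S + 1 = (S - ((p - 1).factorial : K)) + (((p - 1).factorial : K) + 1) := by ring
    rw [this]
    refine (my_ultra hV _ _).trans_lt (max_lt (hSdiff.trans_lt hπ_lt) (hwil.trans_lt hpinv_lt))
  set u : K := -S with hu
  have hu_norm : ‖u‖ = 1 := by rw [hu, norm_neg, hSnorm]
  have hu1 : ‖u - 1‖ < 1 := by
    rw [show u - 1 = -(S + 1) by rw [hu]; ring, norm_neg]
    exact hS1
  have hπu : (ζ - 1) ^ (p - 1) * u = -(p : K) := by
    rw [hu]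
    linear_combination -hπS
  -- Hensel's lemma for X^(p-1) - u
  set f : K[X] := X ^ (p - 1) - C u with hf
  have hcoeff : ∀ n, ‖f.coeff n‖ ≤ 1 := by
    intro n
    rw [hf, coeff_sub, coeff_X_pow, coeff_C]
    split_ifs with h1 h2 h2
    · omega
    · simp
    · simp [hu_norm]
    · simp
  have heval1 : f.eval 1 = 1 - u := by simp [hf]
  have hfe : ‖f.eval 1‖ < 1 := by
    rw [heval1, show (1 : K) - u = -(u - 1) by ring, norm_neg]
    exact hu1
  have hfd : ‖f.derivative.eval 1‖ = 1 := by
    rw [hf]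
    rw [derivative_sub, derivative_C, derivative_X_pow, sub_zero]
    rw [eval_mul, eval_C, eval_pow, eval_X, one_pow, mul_one]
    have : ((p - 1 : ℕ) : K) = -1 + (p : K) := by
      push_cast [Nat.cast_sub (by omega : 1 ≤ p)]
      ring
    rw [this, my_norm_add_eq hV (by rw [norm_neg, norm_one]; exact hpK_lt), norm_neg, norm_one]
  obtain ⟨y, hy1, hy2, hy3⟩ := my_hensel hV f hcoeff 1 (by simp) hfe hfd
  have hyu : y ^ (p - 1) = u := by
    rw [hf] at hy2
    simp only [eval_sub, eval_pow, eval_X, eval_C] at hy2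
    linear_combination hy2
  refine ⟨(ζ - 1) * y, (hV _).2 ?_, ?_⟩
  · rw [norm_mul]
    calc ‖ζ - 1‖ * ‖y‖ ≤ 1 * 1 := mul_le_mul hπ_le hy1 (norm_nonneg _) zero_le_one
      _ = 1 := mul_one 1
  · rw [mul_pow, hyu, hπu]

end Directions
section Direction2
variable {K : Type*} [NormedField K] [CompleteSpace K] {V : Subring K}
  (hV : ∀ x : K, x ∈ V ↔ ‖x‖ ≤ 1)
include hV

theorem dir_xi_to_zeta (p : ℕ) [Fact p.Prime] (hodd : Odd p)
    (hp_norm : ‖(p : K)‖ = (p : ℝ)⁻¹)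
    (ξ : K) (hξV : ξ ∈ V) (hξ : ξ ^ (p - 1) = -(p : K)) :
    ∃ ζ ∈ V, ζ ^ p = 1 ∧ ζ ≠ 1 := by
  classical
  have hp : p.Prime := Fact.out
  have hp2 : 2 ≤ p := hp.two_le
  have hp3 : 3 ≤ p := by
    rcases Nat.lt_or_ge p 3 with h | h
    · interval_cases p
      exact absurd hodd (by decide)
    · exact h
  have hpR : (2 : ℝ) ≤ (p : ℝ) := by exact_mod_cast hp2
  have hpinv_lt : (p : ℝ)⁻¹ < 1 := by rw [inv_lt_one_iff₀]; right; linarith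
  have hpinv_pos : (0 : ℝ) < (p : ℝ)⁻¹ := by positivity
  have hpK0 : (p : K) ≠ 0 := by
    intro h
    rw [h] at hp_norm
    simp only [norm_zero] at hp_norm
    linarith
  have hξ0 : ξ ≠ 0 := by
    intro h
    rw [h, zero_pow (by omega : p - 1 ≠ 0)] at hξ
    exact hpK0 (neg_eq_zero.1 hξ.symm)
  have hξle : ‖ξ‖ ≤ 1 := (hV _).1 hξV
  have hξpow : ‖ξ‖ ^ (p - 1) = (p : ℝ)⁻¹ := by
    have := congrArg norm hξ
    rwa [norm_pow, norm_neg, hp_norm] at this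
  have hξlt : ‖ξ‖ < 1 := by
    by_contra h
    push_neg at h
    have h2 : (1 : ℝ) ≤ ‖ξ‖ ^ (p - 1) := one_le_pow₀ h
    rw [hξpow] at h2
    linarith
  -- the auxiliary polynomial
  set c : ℕ → K := fun j => (p.choose (j + 1) : K) * ξ ^ j / (p : K) with hc
  set g : K[X] := ∑ j ∈ Finset.range p, C (c j) * X ^ j with hg
  have hcmul : ∀ j, (p : K) * c j = (p.choose (j + 1) : K) * ξ ^ j := by
    intro j
    simp only [hc]
    field_simp
  have hc0 : c 0 = 1 := by
    simp only [hc]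
    simp [Nat.choose_one_right, div_self hpK0]
  have hclast : c (p - 1) = -1 := by
    simp only [hc]
    simp only [show p - 1 + 1 = p by omega, Nat.choose_self, Nat.cast_one, one_mul, hξ]
    rw [neg_div, div_self hpK0]
  have hcmid : ∀ j, 1 ≤ j → j ≤ p - 2 → ‖c j‖ ≤ ‖ξ‖ := by
    intro j hj1 hj2
    obtain ⟨m, hm⟩ := hp.dvd_choose_self (by omega : j + 1 ≠ 0) (by omega : j + 1 < p)
    have hcj : c j = (m : K) * ξ ^ j := by
      simp only [hc]
      have : ((p.choose (j + 1) : ℕ) : K) = (p : K) * (m : K) := by exact_mod_cast congrArg (Nat.cast : ℕ → K) hm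
      rw [this]
      field_simp
    rw [hcj, norm_mul, norm_pow]
    calc ‖(m : K)‖ * ‖ξ‖ ^ j ≤ 1 * ‖ξ‖ ^ 1 := by
          refine mul_le_mul ((hV _).1 (natCast_mem V m)) ?_ (by positivity) zero_le_one
          exact pow_le_pow_of_le_one (norm_nonneg _) hξle hj1
      _ = ‖ξ‖ := by rw [one_mul, pow_one]
  have hcle : ∀ j, j < p → ‖c j‖ ≤ 1 := by
    intro j hj
    rcases Nat.eq_or_lt_of_le (Nat.zero_le j) with h0 | h0
    · rw [← h0, hc0, norm_one]
    · rcases eq_or_ne j (p - 1) with hl | hl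
      · rw [hl, hclast, norm_neg, norm_one]
      · exact (hcmid j (by omega) (by omega)).trans hξle
  have hgeval : ∀ t : K, g.eval t = ∑ j ∈ Finset.range p, c j * t ^ j := by
    intro t
    rw [hg, eval_finset_sum]
    simp
  have hkey : ∀ t : K, (1 + ξ * t) ^ p - 1 = (p : K) * ξ * t * g.eval t := by
    intro t
    rw [hgeval]
    have h1 : (1 + ξ * t) ^ p
        = ∑ k ∈ Finset.range (p + 1), (ξ * t) ^ k * 1 ^ (p - k) * (p.choose k : K) := by
      rw [add_comm]
      exact add_pow (ξ * t) 1 p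
    rw [h1, Finset.sum_range_succ']
    simp only [pow_zero, one_pow, one_mul, mul_one, Nat.choose_zero_right, Nat.cast_one]
    rw [add_sub_cancel_right, Finset.mul_sum]
    apply Finset.sum_congr rfl
    intro j _
    linear_combination (-(ξ * t ^ (j + 1))) * hcmul j
  have hcoeffg : ∀ n, ‖g.coeff n‖ ≤ 1 := by
    intro n
    have hcoe : g.coeff n = if n ∈ Finset.range p then c n else 0 := by
      rw [hg, finset_sum_coeff]
      simp only [coeff_C_mul, coeff_X_pow, mul_ite, mul_one, mul_zero]
      exact Finset.sum_ite_eq (Finset.range p) n c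
    rw [hcoe]
    split_ifs with h
    · exact hcle n (Finset.mem_range.1 h)
    · simp
  have heval1g : ‖g.eval 1‖ ≤ ‖ξ‖ := by
    have : g.eval 1 = ∑ j ∈ Finset.range p, c j := by
      rw [hgeval]; simp
    rw [this, show p = p - 2 + 1 + 1 by omega, Finset.sum_range_succ, Finset.sum_range_succ',
      hc0, show p - 2 + 1 = p - 1 by omega, hclast]
    have : (∑ j ∈ Finset.range (p - 2), c (j + 1)) + 1 + -1
        = ∑ j ∈ Finset.range (p - 2), c (j + 1) := by ring
    rw [this]
    exact my_norm_sum_le hV _ _ (norm_nonneg _) fun j hj =>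
      hcmid (j + 1) (by omega) (by have := Finset.mem_range.1 hj; omega)
  have hdg : ‖g.derivative.eval 1‖ = 1 := by
    have hder : g.derivative.eval 1 = ∑ j ∈ Finset.range p, c j * (j : K) := by
      rw [hg, derivative_sum]
      rw [eval_finset_sum]
      apply Finset.sum_congr rfl
      intro j _
      rw [derivative_C_mul_X_pow, eval_mul, eval_C, eval_pow, eval_X, one_pow, mul_one]
    rw [hder, show p = p - 1 + 1 by omega, Finset.sum_range_succ, hclast]
    have hrw : (∑ j ∈ Finset.range (p - 1), c j * (j : K)) + (-1) * ((p - 1 : ℕ) : K)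
        = -((p - 1 : ℕ) : K) + ∑ j ∈ Finset.range (p - 1), c j * (j : K) := by ring
    rw [hrw]
    have hA : ‖∑ j ∈ Finset.range (p - 1), c j * (j : K)‖ ≤ ‖ξ‖ := by
      apply my_norm_sum_le hV _ _ (norm_nonneg _)
      intro j hj
      rcases Nat.eq_zero_or_pos j with h0 | h0
      · simp [h0, norm_nonneg]
      · rw [norm_mul]
        calc ‖c j‖ * ‖(j : K)‖ ≤ ‖ξ‖ * 1 := by
              refine mul_le_mul (hcmid j (by omega) (by have := Finset.mem_range.1 hj; omega)) ?_
                (norm_nonneg _) (norm_nonneg _)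
              exact (hV _).1 (natCast_mem V j)
          _ = ‖ξ‖ := mul_one _
    have hB : ‖-((p - 1 : ℕ) : K)‖ = 1 := by
      rw [norm_neg]
      have : ((p - 1 : ℕ) : K) = -1 + (p : K) := by
        push_cast [Nat.cast_sub (by omega : 1 ≤ p)]
        ring
      rw [this, my_norm_add_eq hV (by rw [norm_neg, norm_one, hp_norm]; exact hpinv_lt),
        norm_neg, norm_one]
    rw [my_norm_add_eq hV (by rw [hB]; exact hA.trans_lt hξlt), hB]
  obtain ⟨τ, hτ1, hτ2, hτ3⟩ := my_hensel hV g hcoeffg 1 (by simp) (heval1g.trans_lt hξlt) hdg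
  have hτn : ‖τ‖ = 1 := by
    rw [show τ = 1 + (τ - 1) by ring,
      my_norm_add_eq hV (by rw [norm_one]; exact hτ3), norm_one]
  have hτ0 : τ ≠ 0 := by
    intro h
    rw [h, norm_zero] at hτn
    linarith
  refine ⟨1 + ξ * τ, (hV _).2 ?_, ?_, ?_⟩
  · refine (my_ultra hV _ _).trans (max_le (by rw [norm_one]) ?_)
    rw [norm_mul]
    calc ‖ξ‖ * ‖τ‖ ≤ 1 * 1 := mul_le_mul hξle hτ1 (norm_nonneg _) zero_le_one
      _ = 1 := mul_one 1
  · have := hkey τ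
    rw [hτ2, mul_zero] at this
    linear_combination this
  · intro h
    have : ξ * τ = 0 := by linear_combination h
    exact hξ0 (by rcases mul_eq_zero.1 this with h' | h'; exact h'; exact absurd h' hτ0)

end Direction2
/-- Let `p` be an odd prime and `V` the ring of integers of a finite
extension `K` of `ℚ_p` (the subring of elements of norm at most 1, for the extended
absolute value).  Then `V` contains a primitive `p`-th root of unity if and only if
`V` contains a `(p-1)`-th root of `-p`. -/
theorem stmt0 (p : ℕ) [Fact p.Prime] (hodd : Odd p)
    (K : Type*) [NormedField K] [NormedAlgebra ℚ_[p] K] [FiniteDimensional ℚ_[p] K]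
    (hiso : ∀ x : ℚ_[p], ‖algebraMap ℚ_[p] K x‖ = ‖x‖)
    (V : Subring K) (hV : ∀ x : K, x ∈ V ↔ ‖x‖ ≤ 1) :
    (∃ ζ ∈ V, ζ ^ p = 1 ∧ ζ ≠ 1) ↔ (∃ ξ ∈ V, ξ ^ (p - 1) = -(p : K)) := by
  haveI : CompleteSpace K := FiniteDimensional.complete ℚ_[p] K
  have hp_norm : ‖(p : K)‖ = (p : ℝ)⁻¹ := by
    have h1 : algebraMap ℚ_[p] K ((p : ℕ) : ℚ_[p]) = (p : K) := map_natCast _ p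
    rw [← h1, hiso]
    exact_mod_cast Padic.norm_p
  constructor
  · rintro ⟨ζ, h1, h2, h3⟩
    exact dir_zeta_to_xi hV p hodd hp_norm ζ h1 h2 h3
  · rintro ⟨ξ, h1, h2⟩
    exact dir_xi_to_zeta hV p hodd hp_norm ξ h1 h2
end

section
/- Every continuous group homomorphism χ: Z_p^* → C_p^* taking values in a complete subfield satisfies: there exists r ≥ 0 such that the map x ↦ χ(1 + p^{r+1} x) from Z_p to C_p^* is given by x ↦ exp(s·log(1 + p^{r+1}x)) for some s ∈ C_p, i.e. χ is locally analytic. -/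
open NormedSpace

/-- The `p`-adic logarithm series: `plog1p z = log (1 + z) = ∑ (-1)ⁿ zⁿ⁺¹/(n+1)`. -/
noncomputable def plog1p {K : Type*} [NormedField K] [CompleteSpace K] (z : K) : K :=
  ∑' n : ℕ, (-1 : K) ^ n * z ^ (n + 1) / (n + 1)

namespace Stmt5Help

open FormalMultilinearSeries
open scoped ENNReal NNReal

/-- coefficients of `log (1+x)` -/
def lc : ℕ → ℚ := fun n => (-1) ^ (n + 1) / n
/-- coefficients of `exp x` -/
def ec : ℕ → ℚ := fun n => (Nat.factorial n : ℚ)⁻¹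
/-- coefficients of `1 + x` -/
def ac : ℕ → ℚ := fun n => if n ≤ 1 then 1 else 0

lemma lc_zero : lc 0 = 0 := by simp [lc]

lemma lc_succ (n : ℕ) : lc (n + 1) = (-1) ^ n / (n + 1) := by
  simp only [lc, pow_succ, pow_succ]
  push_cast
  ring

lemma abs_lc_le_one (n : ℕ) : |lc n| ≤ 1 := by
  cases n with
  | zero => simp [lc_zero]
  | succ k =>
    rw [lc_succ, abs_div, abs_pow, abs_neg, abs_one, one_pow,
      abs_of_nonneg (by positivity : (0:ℚ) ≤ (k:ℚ) + 1)]
    rw [div_le_one (by positivity)]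
    have : (0:ℚ) ≤ (k:ℚ) := by positivity
    linarith

section CompCoeff

variable {𝕜 : Type*} [NontriviallyNormedField 𝕜]

lemma coeff_ofScalars (c : ℕ → 𝕜) (n : ℕ) : (ofScalars 𝕜 c).coeff n = c n := by
  show (ofScalars 𝕜 c n) (fun _ => (1 : 𝕜)) = c n
  rw [ofScalars_apply_eq]
  simp

lemma comp_coeff (q p : FormalMultilinearSeries 𝕜 𝕜 𝕜) (n : ℕ) :
    (q.comp p).coeff n =
      ∑ c : Composition n, (∏ i, p.coeff (c.blocksFun i)) * q.coeff c.length := by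
  show (∑ c : Composition n, q.compAlongComposition p c) (fun _ => (1:𝕜)) = _
  rw [ContinuousMultilinearMap.sum_apply]
  refine Finset.sum_congr rfl fun c _ => ?_
  rw [compAlongComposition_apply]
  -- (congr 1 removed)
  have h1 : p.applyComposition c (fun _ => (1:𝕜)) = fun i => p.coeff (c.blocksFun i) := by
    funext i
    rfl
  rw [h1]
  have := apply_eq_prod_smul_coeff (p := q) (n := c.length) (y := fun i => p.coeff (c.blocksFun i))
  rw [this, smul_eq_mul]

lemma comp_coeff_cast [CharZero 𝕜] (a b : ℕ → ℚ) (n : ℕ) :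
    ((ofScalars 𝕜 fun k => ((a k : ℚ) : 𝕜)).comp (ofScalars 𝕜 fun k => ((b k : ℚ) : 𝕜))).coeff n
      = ((∑ c : Composition n, (∏ i, b (c.blocksFun i)) * a c.length : ℚ) : 𝕜) := by
  rw [comp_coeff]
  rw [Rat.cast_sum]
  refine Finset.sum_congr rfl fun c _ => ?_
  rw [coeff_ofScalars, Rat.cast_mul, Rat.cast_prod]
  exact congrArg (· * _) (Finset.prod_congr rfl fun i _ => by rw [coeff_ofScalars])

lemma expSeries_eq_ofScalars_rat (𝕜 : Type*) [NontriviallyNormedField 𝕜] [CharZero 𝕜] :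
    expSeries 𝕜 𝕜 = ofScalars 𝕜 fun k => ((ec k : ℚ) : 𝕜) := by
  rw [expSeries_eq_ofScalars]
  congr 1
  funext k
  simp [ec]

end CompCoeff

lemma hasFPS_log1p :
    HasFPowerSeriesOnBall (fun x : ℝ => Real.log (1 + x))
      (ofScalars ℝ fun k => ((lc k : ℚ) : ℝ)) 0 ((1/2 : NNReal)) := by
  constructor
  · -- radius
    apply FormalMultilinearSeries.le_radius_of_bound _ 1 (r := (1/2 : NNReal))
    intro n
    rw [ofScalars_norm]
    have h1 : ‖((lc n : ℚ) : ℝ)‖ ≤ 1 := by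
      rw [Real.norm_eq_abs, ← Rat.cast_abs]
      exact_mod_cast abs_lc_le_one n
    have h2 : ((1/2 : NNReal) : ℝ) ^ n ≤ 1 := by
      apply pow_le_one₀ <;> norm_num
    calc ‖((lc n : ℚ) : ℝ)‖ * ((1/2 : NNReal) : ℝ) ^ n ≤ 1 * 1 := by
          apply mul_le_mul h1 h2 (by positivity) (by norm_num)
      _ = 1 := by ring
  · norm_num
  · intro y hy
    have hy'' := ENNReal.coe_lt_coe.mp (mem_emetric_ball_zero_iff.mp hy)
    have hy' : |y| < 1/2 := by
      have : ‖y‖ < ((1/2 : NNReal) : ℝ) := hy''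
      rw [Real.norm_eq_abs] at this
      simpa using this
    have h0 := Real.hasSum_pow_div_log_of_abs_lt_one (x := -y)
      (by rw [abs_neg]; linarith)
    rw [sub_neg_eq_add] at h0
    have h1 : HasSum (fun n : ℕ => ((lc (n+1) : ℚ) : ℝ) • y ^ (n+1)) (Real.log (1 + y)) := by
      have := h0.neg
      rw [neg_neg] at this
      convert this using 2 with n
      case e'_3 => rfl
      rw [lc_succ]
      push_cast
      rw [smul_eq_mul]
      rw [neg_pow]
      ring
    have h2 : HasSum (fun n : ℕ => (ofScalars ℝ fun k => ((lc k : ℚ) : ℝ)) n fun _ => y)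
        (Real.log (1 + (0 + y))) := by
      rw [zero_add]
      rw [ofScalars_apply_eq' (c := fun k => ((lc k : ℚ) : ℝ)) y]
      refine (hasSum_nat_add_iff' 1).mp ?_
      simpa [lc_zero] using h1
    exact h2


lemma hasFPS_affine (𝕜 : Type*) [NontriviallyNormedField 𝕜] :
    HasFPowerSeriesOnBall (fun x : 𝕜 => 1 + x)
      (ofScalars 𝕜 fun k => ((ac k : ℚ) : 𝕜)) 0 ((1 : NNReal)) := by
  constructor
  · apply FormalMultilinearSeries.le_radius_of_bound _ 1 (r := (1 : NNReal))
    intro n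
    rw [ofScalars_norm]
    have h1 : ‖((ac n : ℚ) : 𝕜)‖ ≤ 1 := by
      unfold ac
      split <;> simp
    simpa using h1
  · norm_num
  · intro y _
    rw [zero_add, ofScalars_apply_eq' (c := fun k => ((ac k : ℚ) : 𝕜)) y]
    have heq : (fun n : ℕ => ((ac n : ℚ) : 𝕜) • y ^ n)
        = fun n : ℕ => ((if n = 0 then 1 else 0) + (if n = 1 then y else 0)) := by
      funext n
      match n with
      | 0 => simp [ac]
      | 1 => simp [ac]
      | (k+2) => simp [ac]
    rw [heq]
    simpa using (hasSum_ite_eq 0 (1 : 𝕜)).add (hasSum_ite_eq 1 y)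

/-- The key combinatorial identity, proved by comparison with real exp/log. -/
lemma key_combinatorial (n : ℕ) :
    (∑ c : Composition n, (∏ i, lc (c.blocksFun i)) * ec c.length : ℚ) = ac n := by
  have hlog := hasFPS_log1p.hasFPowerSeriesAt
  have hexp : HasFPowerSeriesAt (exp : ℝ → ℝ) (expSeries ℝ ℝ) 0 :=
    exp_hasFPowerSeriesAt_zero (𝕂 := ℝ) (𝔸 := ℝ)
  have h0 : (fun x : ℝ => Real.log (1+x)) 0 = 0 := by simp
  have hcomp := HasFPowerSeriesAt.comp (g := (exp : ℝ → ℝ))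
    (f := fun x : ℝ => Real.log (1+x)) (by rw [add_zero, Real.log_one]; exact hexp) hlog
  have hev : ((exp : ℝ → ℝ) ∘ (fun x : ℝ => Real.log (1+x))) =ᶠ[nhds 0] (fun x : ℝ => 1 + x) := by
    filter_upwards [Metric.ball_mem_nhds (0:ℝ) (by norm_num : (0:ℝ) < 1/2)] with x hx
    have hx' : |x| < 1/2 := by simpa [Real.dist_eq] using hx
    have hpos : 0 < 1 + x := by
      rcases abs_lt.mp hx' with ⟨h1, _⟩
      linarith
    simp only [Function.comp_apply, ← Real.exp_eq_exp_ℝ]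
    exact Real.exp_log hpos
  have h2 : HasFPowerSeriesAt (fun x : ℝ => 1 + x)
      ((expSeries ℝ ℝ).comp (ofScalars ℝ fun k => ((lc k : ℚ) : ℝ))) 0 := hcomp.congr hev
  have h3 := h2.eq_formalMultilinearSeries (hasFPS_affine ℝ).hasFPowerSeriesAt
  have h4 := congrArg (fun q => FormalMultilinearSeries.coeff q n) h3
  rw [expSeries_eq_ofScalars_rat ℝ, comp_coeff_cast, coeff_ofScalars] at h4
  exact_mod_cast h4


section Padic

variable {p : ℕ} [hp : Fact p.Prime]

lemma ofDigits_zero_of_forall (b : ℕ) (L : List ℕ) (h : ∀ d ∈ L, d = 0) :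
    Nat.ofDigits b L = 0 := by
  induction L with
  | nil => simp
  | cons d L ih =>
    rw [Nat.ofDigits_cons, h d (List.mem_cons_self),
      ih (fun e he => h e (List.mem_cons_of_mem d he))]
    simp

lemma one_le_digits_sum {n : ℕ} (hn : n ≠ 0) : 1 ≤ (Nat.digits p n).sum := by
  rcases Nat.eq_zero_or_pos (Nat.digits p n).sum with h | h
  · exfalso
    apply hn
    have hall : ∀ d ∈ Nat.digits p n, d = 0 := fun d hd =>
      Nat.le_zero.mp (h ▸ List.single_le_sum (fun _ _ => Nat.zero_le _) d hd)
    calc n = Nat.ofDigits p (Nat.digits p n) := (Nat.ofDigits_digits p n).symm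
      _ = 0 := ofDigits_zero_of_forall p _ hall
  · exact h

lemma padicValNat_fact_le {n : ℕ} (hn : 1 ≤ n) : padicValNat p (Nat.factorial n) ≤ n - 1 := by
  have h := sub_one_mul_padicValNat_factorial (p := p) n
  have h2 : padicValNat p (Nat.factorial n) ≤ (p - 1) * padicValNat p (Nat.factorial n) :=
    Nat.le_mul_of_pos_left _ (by have := hp.out.two_le; omega)
  have h3 : n - (Nat.digits p n).sum ≤ n - 1 :=
    Nat.sub_le_sub_left (one_le_digits_sum (by omega)) n
  omega

lemma norm_natCast_inv (n : ℕ) (hn : n ≠ 0) :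
    ‖((n : ℚ_[p]))⁻¹‖ = (p : ℝ) ^ (padicValNat p n : ℤ) := by
  rw [norm_inv, Padic.norm_eq_zpow_neg_valuation (by exact_mod_cast hn), Padic.valuation_natCast,
    ← zpow_neg, neg_neg]

lemma pow_padicValNat_le (n : ℕ) (hn : n ≠ 0) : (p : ℝ) ^ (padicValNat p n : ℤ) ≤ (n : ℝ) := by
  have h := Nat.le_of_dvd (Nat.pos_of_ne_zero hn) (pow_padicValNat_dvd (p := p) (n := n))
  rw [zpow_natCast]
  exact_mod_cast h

lemma norm_lc_le (n : ℕ) : ‖((lc n : ℚ) : ℚ_[p])‖ ≤ (n : ℝ) := by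
  cases n with
  | zero => simp [lc_zero]
  | succ k =>
    rw [lc_succ]
    have hcast : (((-1 : ℚ) ^ k / ((k : ℚ) + 1) : ℚ) : ℚ_[p])
        = ((-1 : ℚ_[p]) ^ k) / (((k+1 : ℕ) : ℚ_[p])) := by
      push_cast
      ring
    rw [hcast, norm_div, norm_pow, norm_neg, norm_one, one_pow, one_div, ← norm_inv,
      norm_natCast_inv _ (Nat.succ_ne_zero k)]
    exact pow_padicValNat_le _ (Nat.succ_ne_zero k)

lemma norm_ec_le (n : ℕ) : ‖((ec n : ℚ) : ℚ_[p])‖ * ((p : ℝ)⁻¹) ^ n ≤ 1 := by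
  have hp1 : (1 : ℝ) < p := by exact_mod_cast hp.out.one_lt
  have hppos : (0 : ℝ) < p := by linarith
  cases n with
  | zero =>
    simp [ec]
  | succ k =>
    have hcast : (((ec (k+1) : ℚ)) : ℚ_[p]) = (((Nat.factorial (k+1) : ℕ) : ℚ_[p]))⁻¹ := by
      unfold ec
      push_cast
      ring
    rw [hcast, norm_natCast_inv _ (Nat.factorial_ne_zero _)]
    have hv : padicValNat p (Nat.factorial (k+1)) ≤ k := by
      have := padicValNat_fact_le (p := p) (n := k+1) (by omega)
      omega
    have h1 : (p : ℝ) ^ (padicValNat p (Nat.factorial (k+1)) : ℤ) ≤ (p : ℝ) ^ (k : ℤ) := by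
      apply zpow_le_zpow_right₀ (le_of_lt hp1)
      exact_mod_cast hv
    calc (p : ℝ) ^ (padicValNat p (Nat.factorial (k+1)) : ℤ) * ((p : ℝ)⁻¹) ^ (k+1)
        ≤ (p : ℝ) ^ (k : ℤ) * ((p : ℝ)⁻¹) ^ (k+1) :=
          mul_le_mul_of_nonneg_right h1 (by positivity)
      _ = (p : ℝ) ^ ((k : ℤ) - (k+1 : ℕ)) := by
          rw [inv_pow, ← zpow_natCast (p:ℝ) (k+1), ← zpow_neg, ← zpow_add₀ (ne_of_gt hppos)]
          ring_nf
      _ = ((p : ℝ) ^ (1:ℤ))⁻¹ := by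
          rw [← zpow_neg]
          congr 1
          push_cast
          ring
      _ ≤ 1 := by
          rw [zpow_one]
          exact inv_le_one_of_one_le₀ (le_of_lt hp1)

end Padic

section Field

variable {p : ℕ} [hp : Fact p.Prime]

lemma norm_ratCast (p : ℕ) [hp : Fact p.Prime] (𝕜 : Type*) [NontriviallyNormedField 𝕜]
    [NormedAlgebra ℚ_[p] 𝕜] (q : ℚ) : ‖((q : ℚ) : 𝕜)‖ = ‖((q : ℚ) : ℚ_[p])‖ := by
  rw [← map_ratCast (algebraMap ℚ_[p] 𝕜) q, norm_algebraMap']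

lemma rinv_pos (p : ℕ) [hp : Fact p.Prime] :
    (0 : ℝ≥0∞) < ((((p : NNReal)⁻¹ : NNReal)) : ℝ≥0∞) := by
  have : (p : NNReal) ≠ 0 := by exact_mod_cast hp.out.ne_zero
  simp [pos_iff_ne_zero, this]

lemma rinv_coe (p : ℕ) [hp : Fact p.Prime] : ((((p : NNReal)⁻¹ : NNReal)) : ℝ) = (p : ℝ)⁻¹ := by simp

lemma nat_le_pow_real (p : ℕ) [hp : Fact p.Prime] (n : ℕ) : (n : ℝ) ≤ (p : ℝ) ^ n := by
  have h1 : n ≤ 2 ^ n := le_of_lt (Nat.lt_two_pow_self (n := n))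
  have h2 : (2:ℕ) ^ n ≤ p ^ n := Nat.pow_le_pow_left hp.out.two_le n
  exact_mod_cast le_trans h1 h2

lemma radius_logS (p : ℕ) [hp : Fact p.Prime] (𝕜 : Type*) [NontriviallyNormedField 𝕜]
    [NormedAlgebra ℚ_[p] 𝕜] :
    ((((p : NNReal)⁻¹ : NNReal)) : ℝ≥0∞) ≤ (ofScalars 𝕜 fun k => ((lc k : ℚ) : 𝕜)).radius := by
  apply FormalMultilinearSeries.le_radius_of_bound _ 1
  intro n
  rw [ofScalars_norm, norm_ratCast p 𝕜, rinv_coe]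
  have hppos : (0:ℝ) < p := by exact_mod_cast hp.out.pos
  calc ‖((lc n : ℚ) : ℚ_[p])‖ * ((p:ℝ)⁻¹) ^ n ≤ (n : ℝ) * ((p:ℝ)⁻¹) ^ n := by
        apply mul_le_mul_of_nonneg_right (norm_lc_le n) (by positivity)
    _ ≤ 1 := by
        rw [inv_pow, ← div_eq_mul_inv, div_le_one (by positivity)]
        exact nat_le_pow_real p n

lemma radius_expS (p : ℕ) [hp : Fact p.Prime] (𝕜 : Type*) [NontriviallyNormedField 𝕜]
    [NormedAlgebra ℚ_[p] 𝕜] :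
    ((((p : NNReal)⁻¹ : NNReal)) : ℝ≥0∞) ≤ (expSeries 𝕜 𝕜).radius := by
  haveI : CharZero 𝕜 := charZero_of_injective_algebraMap (algebraMap ℚ_[p] 𝕜).injective
  apply FormalMultilinearSeries.le_radius_of_bound _ 1
  intro n
  rw [expSeries_eq_ofScalars_rat, ofScalars_norm, norm_ratCast p 𝕜, rinv_coe]
  exact norm_ec_le n

lemma radius_expS_pos (p : ℕ) [hp : Fact p.Prime] (𝕜 : Type*) [NontriviallyNormedField 𝕜]
    [NormedAlgebra ℚ_[p] 𝕜] : (0 : ℝ≥0∞) < (expSeries 𝕜 𝕜).radius :=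
  lt_of_lt_of_le (rinv_pos p) (radius_expS p 𝕜)

lemma plog1p_zero' (𝕜 : Type*) [NormedField 𝕜] [CompleteSpace 𝕜] : plog1p (0 : 𝕜) = 0 := by
  unfold plog1p
  convert tsum_zero with n
  simp

lemma hasFPS_plog1p (p : ℕ) [hp : Fact p.Prime] (𝕜 : Type*) [NontriviallyNormedField 𝕜]
    [NormedAlgebra ℚ_[p] 𝕜] [CompleteSpace 𝕜] :
    HasFPowerSeriesOnBall (plog1p : 𝕜 → 𝕜) (ofScalars 𝕜 fun k => ((lc k : ℚ) : 𝕜)) 0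
      ((((p : NNReal)⁻¹ : NNReal)) : ℝ≥0∞) := by
  haveI : CharZero 𝕜 := charZero_of_injective_algebraMap (algebraMap ℚ_[p] 𝕜).injective
  constructor
  · exact radius_logS p 𝕜
  · exact rinv_pos p
  · intro y hy
    rw [zero_add, ofScalars_apply_eq' (c := fun k => ((lc k : ℚ) : 𝕜)) y]
    have hppos : (0:ℝ) < p := by exact_mod_cast hp.out.pos
    have hy' : ‖y‖ < (p:ℝ)⁻¹ := by
      have h := ENNReal.coe_lt_coe.mp (mem_emetric_ball_zero_iff.mp hy)
      calc ‖y‖ = ((‖y‖₊ : NNReal) : ℝ) := rfl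
        _ < ((((p : NNReal)⁻¹ : NNReal)) : ℝ) := by exact_mod_cast h
        _ = (p:ℝ)⁻¹ := rinv_coe p
    have hy1 : ‖y‖ < 1 := lt_of_lt_of_le hy' (by
      rw [inv_le_one_iff₀]
      right
      exact_mod_cast hp.out.one_lt.le)
    have hnorm : ∀ n, ‖((lc n : ℚ) : 𝕜) • y ^ n‖ ≤ (n : ℝ) * ‖y‖ ^ n := by
      intro n
      rw [norm_smul, norm_pow, norm_ratCast p 𝕜]
      exact mul_le_mul_of_nonneg_right (norm_lc_le n) (by positivity)
    have hgeom : Summable (fun n : ℕ => (n : ℝ) * ‖y‖ ^ n) := by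
      have := summable_pow_mul_geometric_of_norm_lt_one (R := ℝ) 1
        (r := ‖y‖) (by rwa [Real.norm_eq_abs, abs_of_nonneg (norm_nonneg y)])
      simpa using this
    have hsum : Summable (fun n : ℕ => ((lc n : ℚ) : 𝕜) • y ^ n) :=
      Summable.of_norm_bounded hgeom hnorm
    have htsum : ∑' n : ℕ, ((lc n : ℚ) : 𝕜) • y ^ n = plog1p y := by
      rw [Summable.tsum_eq_zero_add hsum]
      rw [lc_zero]
      simp only [Rat.cast_zero, zero_smul, zero_add]
      unfold plog1p
      apply tsum_congr
      intro n
      rw [lc_succ, Rat.cast_div, Rat.cast_pow, Rat.cast_neg, Rat.cast_one, smul_eq_mul]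
      have hden : (((1 + (n : ℚ)) : ℚ) : 𝕜) = 1 + (n : 𝕜) := by push_cast; ring
      rw [show ((n : ℚ) + 1) = (1 + (n:ℚ)) from by ring, hden]
      ring
    exact htsum ▸ hsum.hasSum

lemma exp_plog1p (p : ℕ) [hp : Fact p.Prime] (𝕜 : Type*) [NontriviallyNormedField 𝕜]
    [NormedAlgebra ℚ_[p] 𝕜] [CompleteSpace 𝕜] :
    ∃ δ : ℝ, 0 < δ ∧ ∀ w : 𝕜, ‖w‖ < δ → exp (plog1p w) = 1 + w := by
  haveI : CharZero 𝕜 := charZero_of_injective_algebraMap (algebraMap ℚ_[p] 𝕜).injective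
  have hexp : HasFPowerSeriesAt (exp : 𝕜 → 𝕜) (expSeries 𝕜 𝕜) 0 :=
    hasFPowerSeriesAt_exp_zero_of_radius_pos (radius_expS_pos p 𝕜)
  have hlog := (hasFPS_plog1p p 𝕜).hasFPowerSeriesAt
  have hcomp := HasFPowerSeriesAt.comp (g := (exp : 𝕜 → 𝕜)) (f := plog1p)
    (by rw [plog1p_zero' 𝕜]; exact hexp) hlog
  have hco : ∀ n, ((expSeries 𝕜 𝕜).comp (ofScalars 𝕜 fun k => ((lc k : ℚ) : 𝕜))).coeff n
      = ((ac n : ℚ) : 𝕜) := by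
    intro n
    rw [expSeries_eq_ofScalars_rat, comp_coeff_cast, key_combinatorial]
  obtain ⟨r, hball⟩ := hcomp
  obtain ⟨δ, hδ0, hδr⟩ : ∃ δ : ℝ, 0 < δ ∧ ENNReal.ofReal δ ≤ r := by
    rcases ENNReal.lt_iff_exists_real_btwn.mp hball.r_pos with ⟨q, hq0, hq1, hq2⟩
    exact ⟨q, ENNReal.ofReal_pos.mp hq1, le_of_lt hq2⟩
  refine ⟨δ, hδ0, fun w hw => ?_⟩
  have hmem : w ∈ Metric.eball (0 : 𝕜) r := by
    rw [Metric.mem_eball, edist_zero_right, ← ofReal_norm]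
    exact lt_of_lt_of_le ((ENNReal.ofReal_lt_ofReal_iff hδ0).mpr hw) hδr
  have hs := hball.hasSum hmem
  rw [zero_add] at hs
  have hterm : (fun n => ((expSeries 𝕜 𝕜).comp (ofScalars 𝕜 fun k => ((lc k : ℚ) : 𝕜))) n
      fun _ => w) = fun n => (if n = 0 then (1:𝕜) else 0) + (if n = 1 then w else 0) := by
    funext n
    rw [FormalMultilinearSeries.apply_eq_pow_smul_coeff, hco]
    match n with
    | 0 => simp [ac]
    | 1 => simp [ac]
    | (k+2) => simp [ac]
  rw [hterm] at hs
  exact hs.unique ((hasSum_ite_eq 0 (1:𝕜)).add (hasSum_ite_eq 1 w))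

end Field

section Padic2

lemma succ_le_four_pow (n : ℕ) : n + 1 ≤ 4 ^ n := by
  induction n with
  | zero => norm_num
  | succ k ih =>
    have h1 : 1 ≤ 4 ^ k := Nat.one_le_pow _ _ (by norm_num)
    rw [pow_succ]
    nlinarith

lemma nat_succ_le_p_sq_pow (p : ℕ) [hp : Fact p.Prime] (n : ℕ) :
    ((n : ℝ) + 1) ≤ ((p : ℝ) ^ 2) ^ n := by
  have h2 : (2:ℝ) ≤ (p:ℝ) := by exact_mod_cast hp.out.two_le
  have h4 : ((4:ℝ)) ^ n ≤ ((p:ℝ)^2) ^ n := by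
    apply pow_le_pow_left₀ (by norm_num)
    nlinarith
  calc ((n:ℝ) + 1) ≤ ((4:ℝ)) ^ n := by exact_mod_cast succ_le_four_pow n
    _ ≤ ((p:ℝ)^2) ^ n := h4

lemma norm_natCast_inv_algebra (p : ℕ) [hp : Fact p.Prime] (𝕜 : Type*)
    [NontriviallyNormedField 𝕜] [NormedAlgebra ℚ_[p] 𝕜] (n : ℕ) :
    ‖((n : 𝕜))⁻¹‖ = ‖((n : ℚ_[p]))⁻¹‖ := by
  rw [← map_natCast (algebraMap ℚ_[p] 𝕜) n, ← map_inv₀, norm_algebraMap']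

lemma norm_natCast_le_one_algebra (p : ℕ) [hp : Fact p.Prime] (𝕜 : Type*)
    [NontriviallyNormedField 𝕜] [NormedAlgebra ℚ_[p] 𝕜] (n : ℕ) : ‖(n : 𝕜)‖ ≤ 1 := by
  rw [← map_natCast (algebraMap ℚ_[p] 𝕜) n, norm_algebraMap']
  have : ((n : ℕ) : ℚ_[p]) = ((n : ℤ) : ℚ_[p]) := by push_cast; ring
  rw [this]
  exact Padic.norm_int_le_one _

lemma mem_ball_expS (p : ℕ) [hp : Fact p.Prime] (𝕜 : Type*) [NontriviallyNormedField 𝕜]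
    [NormedAlgebra ℚ_[p] 𝕜] {t : 𝕜} (ht : ‖t‖ ≤ ((p:ℝ)⁻¹) ^ 2) :
    t ∈ Metric.eball (0 : 𝕜) (expSeries 𝕜 𝕜).radius := by
  rw [Metric.mem_eball, edist_zero_right]
  have hp1 : (1:ℝ) < (p:ℝ) := by exact_mod_cast hp.out.one_lt
  have h1 : (‖t‖₊ : ℝ≥0∞) < ((((p : NNReal)⁻¹ : NNReal)) : ℝ≥0∞) := by
    rw [ENNReal.coe_lt_coe, ← NNReal.coe_lt_coe]
    calc ((‖t‖₊ : NNReal) : ℝ) = ‖t‖ := rfl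
      _ ≤ ((p:ℝ)⁻¹) ^ 2 := ht
      _ < (p:ℝ)⁻¹ := by
          rw [sq]
          exact mul_lt_of_lt_one_left (by positivity) (inv_lt_one_of_one_lt₀ hp1)
      _ = ((((p : NNReal)⁻¹ : NNReal)) : ℝ) := (rinv_coe p).symm
  exact lt_of_lt_of_le h1 (radius_expS p 𝕜)

lemma norm_plog1p_le (p : ℕ) [hp : Fact p.Prime] (𝕜 : Type*) [NontriviallyNormedField 𝕜]
    [NormedAlgebra ℚ_[p] 𝕜] [CompleteSpace 𝕜] {w : 𝕜} (hw : ‖w‖ ≤ ((p:ℝ)⁻¹) ^ 2) :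
    ‖plog1p w‖ ≤ ‖w‖ := by
  haveI : IsUltrametricDist 𝕜 := IsUltrametricDist.of_normedAlgebra ℚ_[p]
  unfold plog1p
  apply IsUltrametricDist.norm_tsum_le_of_forall_le_of_nonneg (norm_nonneg w)
  intro n
  have hd : ((n : 𝕜) + 1) = ((n + 1 : ℕ) : 𝕜) := by push_cast; ring
  rw [norm_div, norm_mul, norm_pow, norm_neg, norm_one, one_pow, one_mul, norm_pow,
    div_eq_mul_inv, ← norm_inv, hd, norm_natCast_inv_algebra p 𝕜,
    norm_natCast_inv _ (Nat.succ_ne_zero n)]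
  have hple : (p : ℝ) ^ (padicValNat p (n+1) : ℤ) ≤ ((n : ℝ) + 1) := by
    have := pow_padicValNat_le (p := p) (n+1) (Nat.succ_ne_zero n)
    push_cast at this ⊢
    linarith
  have hw2 : ‖w‖ ^ n ≤ (((p:ℝ)⁻¹) ^ 2) ^ n :=
    pow_le_pow_left₀ (norm_nonneg w) hw n
  calc ‖w‖ ^ (n+1) * (p : ℝ) ^ (padicValNat p (n+1) : ℤ)
      ≤ (‖w‖ * (((p:ℝ)⁻¹) ^ 2) ^ n) * ((n : ℝ) + 1) := by
        rw [pow_succ']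
        apply mul_le_mul ?_ hple (by positivity) (by positivity)
        exact mul_le_mul_of_nonneg_left hw2 (norm_nonneg w)
    _ ≤ ‖w‖ * 1 := by
        rw [mul_assoc]
        apply mul_le_mul_of_nonneg_left ?_ (norm_nonneg w)
        have hpp : (0:ℝ) < p := by exact_mod_cast hp.out.pos
        have hpos : (0:ℝ) < ((p:ℝ)^2)^n := by positivity
        have hrw : (((p:ℝ)⁻¹) ^ 2) ^ n = (((p:ℝ)^2)^n)⁻¹ := by
          rw [← inv_pow, ← inv_pow]
        rw [hrw, mul_comm, ← div_eq_mul_inv, div_le_one hpos]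
        exact nat_succ_le_p_sq_pow p n
    _ = ‖w‖ := mul_one _

lemma norm_exp_sub_one_le (p : ℕ) [hp : Fact p.Prime] (𝕜 : Type*) [NontriviallyNormedField 𝕜]
    [NormedAlgebra ℚ_[p] 𝕜] [CompleteSpace 𝕜] {t : 𝕜} (ht : ‖t‖ ≤ ((p:ℝ)⁻¹) ^ 2) :
    ‖exp t - 1‖ ≤ ‖t‖ := by
  haveI : IsUltrametricDist 𝕜 := IsUltrametricDist.of_normedAlgebra ℚ_[p]
  haveI : CharZero 𝕜 := charZero_of_injective_algebraMap (algebraMap ℚ_[p] 𝕜).injective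
  have hs := expSeries_hasSum_exp_of_mem_ball' t (mem_ball_expS p 𝕜 ht)
  have hshift := (hasSum_nat_add_iff'
    (f := fun n => ((Nat.factorial n : 𝕜))⁻¹ • t ^ n) 1).mpr hs
  have h0 : ∑ i ∈ Finset.range 1, ((Nat.factorial i : 𝕜))⁻¹ • t ^ i = 1 := by
    simp [Nat.factorial]
  rw [h0] at hshift
  rw [← hshift.tsum_eq]
  apply IsUltrametricDist.norm_tsum_le_of_forall_le_of_nonneg (norm_nonneg t)
  intro n
  rw [norm_smul, norm_pow, norm_natCast_inv_algebra p 𝕜,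
    norm_natCast_inv _ (Nat.factorial_ne_zero (n+1))]
  have hfle : (p : ℝ) ^ (padicValNat p (Nat.factorial (n+1)) : ℤ) ≤ (p:ℝ) ^ n := by
    have hv : padicValNat p (Nat.factorial (n+1)) ≤ n := by
      have := padicValNat_fact_le (p := p) (n := n+1) (by omega)
      omega
    calc (p : ℝ) ^ (padicValNat p (Nat.factorial (n+1)) : ℤ) ≤ (p:ℝ) ^ (n : ℤ) := by
          apply zpow_le_zpow_right₀ (by exact_mod_cast hp.out.one_le)
          exact_mod_cast hv
      _ = (p:ℝ) ^ n := by rw [zpow_natCast]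
  have hw2 : ‖t‖ ^ n ≤ (((p:ℝ)⁻¹) ^ 2) ^ n := pow_le_pow_left₀ (norm_nonneg t) ht n
  have hppos : (0:ℝ) < p := by exact_mod_cast hp.out.pos
  calc (p : ℝ) ^ (padicValNat p (Nat.factorial (n+1)) : ℤ) * ‖t‖ ^ (n+1)
      ≤ (p:ℝ) ^ n * (‖t‖ * (((p:ℝ)⁻¹) ^ 2) ^ n) := by
        rw [pow_succ']
        apply mul_le_mul hfle ?_ (by positivity) (by positivity)
        exact mul_le_mul_of_nonneg_left hw2 (norm_nonneg t)
    _ = ‖t‖ * ((p:ℝ) ^ n * ((p:ℝ)⁻¹) ^ (2*n)) := by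
        rw [pow_mul]
        ring
    _ ≤ ‖t‖ * 1 := by
        apply mul_le_mul_of_nonneg_left ?_ (norm_nonneg t)
        rw [inv_pow, ← div_eq_mul_inv, div_le_one (by positivity)]
        exact pow_le_pow_right₀ (by exact_mod_cast hp.out.one_le) (by omega)
    _ = ‖t‖ := mul_one _

lemma norm_one_add_small (𝕜 : Type*) [NormedDivisionRing 𝕜] [IsUltrametricDist 𝕜]
    {e : 𝕜} (he : ‖e‖ < 1) : ‖1 + e‖ = 1 := by
  apply le_antisymm
  · calc ‖1 + e‖ ≤ max ‖(1:𝕜)‖ ‖e‖ := IsUltrametricDist.norm_add_le_max _ _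
      _ = 1 := by rw [norm_one]; exact max_eq_left he.le
  · have h2 : ‖(1:𝕜)‖ ≤ max ‖1 + e‖ ‖-e‖ := by
      calc ‖(1:𝕜)‖ = ‖(1 + e) + (-e)‖ := by rw [add_neg_cancel_right]
        _ ≤ max ‖1 + e‖ ‖-e‖ := IsUltrametricDist.norm_add_le_max _ _
    rw [norm_one, norm_neg] at h2
    rcases max_cases ‖1 + e‖ ‖e‖ with ⟨hm, _⟩ | ⟨hm, _⟩ <;> rw [hm] at h2 <;> linarith

lemma norm_exp_eq_one (p : ℕ) [hp : Fact p.Prime] (𝕜 : Type*) [NontriviallyNormedField 𝕜]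
    [NormedAlgebra ℚ_[p] 𝕜] [CompleteSpace 𝕜] {t : 𝕜} (ht : ‖t‖ ≤ ((p:ℝ)⁻¹) ^ 2) :
    ‖exp t‖ = 1 := by
  haveI : IsUltrametricDist 𝕜 := IsUltrametricDist.of_normedAlgebra ℚ_[p]
  have hp1 : (1:ℝ) < (p:ℝ) := by exact_mod_cast hp.out.one_lt
  have h1 : ‖exp t - 1‖ < 1 := by
    calc ‖exp t - 1‖ ≤ ‖t‖ := norm_exp_sub_one_le p 𝕜 ht
      _ ≤ ((p:ℝ)⁻¹) ^ 2 := ht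
      _ < 1 := by
          apply pow_lt_one₀ (by positivity) (inv_lt_one_of_one_lt₀ hp1) (by norm_num)
  have h2 : exp t = 1 + (exp t - 1) := by ring
  rw [h2, norm_one_add_small 𝕜 h1]

end Padic2

section Units

variable {p : ℕ} [hp : Fact p.Prime]

lemma padArg_norm (m : ℕ) (z : ℤ_[p]) :
    ‖(p:ℚ_[p]) ^ m * (z:ℚ_[p])‖ ≤ ((p:ℝ)⁻¹) ^ m := by
  rw [norm_mul, Padic.norm_p_pow]
  have h1 : ‖(z:ℚ_[p])‖ ≤ 1 := by
    rw [PadicInt.padic_norm_e_of_padicInt]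
    exact PadicInt.norm_le_one z
  have h2 : ((p:ℝ)) ^ (-(m:ℤ)) = ((p:ℝ)⁻¹) ^ m := by
    rw [zpow_neg, zpow_natCast, inv_pow]
  rw [h2]
  exact mul_le_of_le_one_right (by positivity) h1

lemma padArg_norm₂ (m : ℕ) (z : ℤ_[p]) :
    ‖(p:ℚ_[p]) ^ (2+m) * (z:ℚ_[p])‖ ≤ ((p:ℝ)⁻¹) ^ 2 := by
  have hp1 : (1:ℝ) < (p:ℝ) := by exact_mod_cast hp.out.one_lt
  calc ‖(p:ℚ_[p]) ^ (2+m) * (z:ℚ_[p])‖ ≤ ((p:ℝ)⁻¹) ^ (2+m) := padArg_norm _ _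
    _ ≤ ((p:ℝ)⁻¹) ^ 2 :=
        pow_le_pow_of_le_one (by positivity) (inv_le_one_of_one_le₀ hp1.le) (by omega)

lemma exp_add_small (p : ℕ) [hp : Fact p.Prime] (𝕜 : Type*) [NontriviallyNormedField 𝕜]
    [NormedAlgebra ℚ_[p] 𝕜] [CompleteSpace 𝕜] {a b : 𝕜}
    (ha : ‖a‖ ≤ ((p:ℝ)⁻¹) ^ 2) (hb : ‖b‖ ≤ ((p:ℝ)⁻¹) ^ 2) :
    exp (a + b) = exp a * exp b := by
  haveI : CharZero 𝕜 := charZero_of_injective_algebraMap (algebraMap ℚ_[p] 𝕜).injective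
  exact exp_add_of_mem_ball (mem_ball_expS p 𝕜 ha) (mem_ball_expS p 𝕜 hb)

/-- The unit `exp (p^(2+m) z)` of `ℤ_p`. -/
noncomputable def Upad (p : ℕ) [hp : Fact p.Prime] (m : ℕ) (z : ℤ_[p]) : ℤ_[p]ˣ where
  val := ⟨exp ((p:ℚ_[p]) ^ (2+m) * (z:ℤ_[p])), by
    exact le_of_eq (norm_exp_eq_one p ℚ_[p] (padArg_norm₂ m z))⟩
  inv := ⟨exp ((p:ℚ_[p]) ^ (2+m) * ((-z : ℤ_[p]):ℚ_[p])), by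
    exact le_of_eq (norm_exp_eq_one p ℚ_[p] (padArg_norm₂ m (-z)))⟩
  val_inv := by
    apply Subtype.ext
    show (exp _ : ℚ_[p]) * exp _ = 1
    rw [← exp_add_small p ℚ_[p] (padArg_norm₂ m z) (padArg_norm₂ m (-z))]
    have h : (p:ℚ_[p]) ^ (2+m) * (z:ℤ_[p]) + (p:ℚ_[p]) ^ (2+m) * ((-z : ℤ_[p]):ℚ_[p]) = 0 := by
      push_cast
      ring
    rw [h, exp_zero]
  inv_val := by
    apply Subtype.ext
    show (exp _ : ℚ_[p]) * exp _ = 1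
    rw [← exp_add_small p ℚ_[p] (padArg_norm₂ m (-z)) (padArg_norm₂ m z)]
    have h : (p:ℚ_[p]) ^ (2+m) * ((-z : ℤ_[p]):ℚ_[p]) + (p:ℚ_[p]) ^ (2+m) * (z:ℤ_[p]) = 0 := by
      push_cast
      ring
    rw [h, exp_zero]

lemma Upad_val (m : ℕ) (z : ℤ_[p]) :
    (((Upad p m z : ℤ_[p]ˣ) : ℤ_[p]) : ℚ_[p]) = exp ((p:ℚ_[p]) ^ (2+m) * (z:ℚ_[p])) := rfl

lemma Upad_hom (m : ℕ) (z z' : ℤ_[p]) :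
    Upad p m (z + z') = Upad p m z * Upad p m z' := by
  apply Units.ext
  apply Subtype.ext
  rw [Units.val_mul, PadicInt.coe_mul, Upad_val, Upad_val, Upad_val]
  rw [← exp_add_small p ℚ_[p] (padArg_norm₂ m z) (padArg_norm₂ m z')]
  congr 1
  push_cast
  ring

lemma Upad_zero (m : ℕ) : Upad p m (0 : ℤ_[p]) = 1 := by
  apply Units.ext
  apply Subtype.ext
  rw [Upad_val]
  simp [exp_zero]

lemma Upad_shift (m : ℕ) (z : ℤ_[p]) :
    Upad p m z = Upad p 0 ((p:ℤ_[p]) ^ m * z) := by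
  apply Units.ext
  apply Subtype.ext
  rw [Upad_val, Upad_val]
  congr 1
  push_cast
  ring

lemma Upad_cont (m : ℕ) : Continuous (Upad p m) := by
  rw [Units.continuous_iff]
  constructor
  · apply Continuous.subtype_mk
    apply (continuousOn_exp (𝕂 := ℚ_[p]) (𝔸 := ℚ_[p])).comp_continuous
    · exact continuous_const.mul (continuous_subtype_val : Continuous ((↑) : ℤ_[p] → ℚ_[p]))
    · intro z
      exact mem_ball_expS p ℚ_[p] (padArg_norm₂ m z)
  · apply Continuous.subtype_mk
    apply (continuousOn_exp (𝕂 := ℚ_[p]) (𝔸 := ℚ_[p])).comp_continuous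
    · exact continuous_const.mul (continuous_subtype_val.comp continuous_neg : Continuous fun x : ℤ_[p] => ((-x : ℤ_[p]) : ℚ_[p]))
    · intro z
      exact mem_ball_expS p ℚ_[p] (padArg_norm₂ m (-z))

lemma algebraMap_plog1p (p : ℕ) [hp : Fact p.Prime] (𝕜 : Type*) [NontriviallyNormedField 𝕜]
    [NormedAlgebra ℚ_[p] 𝕜] [CompleteSpace 𝕜] {w : ℚ_[p]} (hw : ‖w‖ < 1) :
    plog1p (algebraMap ℚ_[p] 𝕜 w) = algebraMap ℚ_[p] 𝕜 (plog1p w) := by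
  have hb : ∀ n : ℕ, ‖(-1:ℚ_[p])^n * w^(n+1)/((n:ℚ_[p])+1)‖ ≤ ((n:ℝ)+1) * ‖w‖^(n+1) := by
    intro n
    rw [norm_div, norm_mul, norm_pow, norm_neg, norm_one, one_pow, one_mul, norm_pow,
      div_eq_mul_inv, ← norm_inv]
    have hd : ((n : ℚ_[p]) + 1) = ((n + 1 : ℕ) : ℚ_[p]) := by push_cast; ring
    rw [hd, norm_natCast_inv _ (Nat.succ_ne_zero n), mul_comm]
    apply mul_le_mul_of_nonneg_right ?_ (by positivity)
    have := pow_padicValNat_le (p := p) (n+1) (Nat.succ_ne_zero n)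
    push_cast at this ⊢
    linarith
  have hgeom : Summable fun n : ℕ => ((n:ℝ)+1) * ‖w‖^(n+1) := by
    have h1 := summable_pow_mul_geometric_of_norm_lt_one (R := ℝ) 1 (r := ‖w‖)
      (by rwa [Real.norm_eq_abs, abs_of_nonneg (norm_nonneg w)])
    have h2 := (summable_nat_add_iff 1).mpr h1
    apply h2.congr
    intro n
    push_cast
    ring
  have hsum : Summable (fun n : ℕ => (-1:ℚ_[p])^n * w^(n+1)/((n:ℚ_[p])+1)) :=
    Summable.of_norm_bounded hgeom hb
  have hiso : Continuous (algebraMap ℚ_[p] 𝕜) :=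
    (AddMonoidHomClass.isometry_of_norm _ (fun x => norm_algebraMap' 𝕜 x)).continuous
  have hmap := (hsum.hasSum.map (algebraMap ℚ_[p] 𝕜) hiso).tsum_eq
  unfold plog1p
  rw [← hmap]
  apply tsum_congr
  intro n
  simp [map_div₀, map_mul, map_pow]

end Units

end Stmt5Help

open Stmt5Help in
/-- Every continuous character `χ : ℤ_pˣ → Kˣ` (with `K` a finite extension
of `ℚ_p`) is locally analytic: there are `r ≥ 0` and `s ∈ K` such that for every
`x ∈ ℤ_p`, `χ (1 + p^(r+1) x) = exp (s · log (1 + p^(r+1) x))`. -/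
theorem stmt5 (p : ℕ) [Fact p.Prime] (K : Type*) [NormedField K] [CompleteSpace K]
    [NormedAlgebra ℚ_[p] K] [FiniteDimensional ℚ_[p] K]
    (χ : ℤ_[p]ˣ →* Kˣ) (hχ : Continuous fun u : ℤ_[p]ˣ => (χ u : K)) :
    ∃ (r : ℕ) (s : K), ∀ (x : ℤ_[p]) (u : ℤ_[p]ˣ),
      (u : ℤ_[p]) = 1 + (p : ℤ_[p]) ^ (r + 1) * x →
      (χ u : K) =
        exp (s * plog1p (algebraMap ℚ_[p] K
          ((((p : ℤ_[p]) ^ (r + 1) * x : ℤ_[p]) : ℚ_[p])))) := by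
  have hp' : Fact p.Prime := ‹_›
  letI : NontriviallyNormedField K :=
    { ‹NormedField K› with
      non_trivial := by
        refine ⟨algebraMap ℚ_[p] K ((p:ℚ_[p]))⁻¹, ?_⟩
        rw [map_inv₀, norm_inv, norm_algebraMap', Padic.norm_p, inv_inv]
        exact_mod_cast hp'.out.one_lt }
  haveI : IsUltrametricDist K := IsUltrametricDist.of_normedAlgebra ℚ_[p]
  haveI : CharZero K := charZero_of_injective_algebraMap (algebraMap ℚ_[p] K).injective
  have hp1 : (1:ℝ) < (p:ℝ) := by exact_mod_cast hp'.out.one_lt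
  have hppos : (0:ℝ) < (p:ℝ)⁻¹ := by positivity
  have hplt1 : (p:ℝ)⁻¹ < 1 := inv_lt_one_of_one_lt₀ hp1
  obtain ⟨δK, hδK0, hδK⟩ := exp_plog1p p K
  obtain ⟨δp, hδp0, hδp⟩ := exp_plog1p p ℚ_[p]
  set εK := min δK (((p:ℝ)⁻¹)^2) with hεKdef
  have hεK0 : 0 < εK := lt_min hδK0 (by positivity)
  have hcont0 : Continuous (fun z : ℤ_[p] => ((χ (Upad p 0 z) : Kˣ) : K)) :=
    hχ.comp (Upad_cont 0)
  have h10 : ((χ (Upad p 0 0) : Kˣ) : K) = 1 := by rw [Upad_zero, map_one, Units.val_one]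
  obtain ⟨δg, hδg0, hδg⟩ := Metric.continuous_iff.mp hcont0 0 εK hεK0
  obtain ⟨k1, hk1⟩ := exists_pow_lt_of_lt_one hδg0 hplt1
  obtain ⟨k2, hk2⟩ := exists_pow_lt_of_lt_one hδp0 hplt1
  set m0 := max k1 k2 with hm0def
  have hsmall : ∀ z : ℤ_[p], ‖((χ (Upad p m0 z) : Kˣ) : K) - 1‖ < εK := by
    intro z
    have hnz : ‖(p:ℤ_[p])^m0 * z‖ ≤ ((p:ℝ)⁻¹)^m0 := by
      rw [PadicInt.norm_def]
      have hcz : (((p:ℤ_[p])^m0 * z : ℤ_[p]) : ℚ_[p]) = (p:ℚ_[p])^m0 * (z:ℚ_[p]) := by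
        push_cast
        ring
      rw [hcz]
      exact padArg_norm m0 z
    have hdist : dist ((p:ℤ_[p])^m0 * z) 0 < δg := by
      rw [dist_zero_right]
      calc ‖(p:ℤ_[p])^m0 * z‖ ≤ ((p:ℝ)⁻¹)^m0 := hnz
        _ ≤ ((p:ℝ)⁻¹)^k1 :=
            pow_le_pow_of_le_one hppos.le hplt1.le (le_max_left _ _)
        _ < δg := hk1
    have h := hδg _ hdist
    rw [dist_eq_norm, h10] at h
    rw [Upad_shift m0 z]
    exact h
  set Ψ : ℤ_[p] → K := fun z => ((χ (Upad p m0 z) : Kˣ) : K) with hΨdef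
  set c := plog1p (Ψ 1 - 1) with hcdef
  have hΨ1εK : ‖Ψ 1 - 1‖ < εK := hsmall 1
  have hΨ1p2 : ‖Ψ 1 - 1‖ ≤ ((p:ℝ)⁻¹)^2 :=
    le_of_lt (lt_of_lt_of_le hΨ1εK (min_le_right _ _))
  have hcnorm : ‖c‖ ≤ ((p:ℝ)⁻¹)^2 := le_trans (norm_plog1p_le p K hΨ1p2) hΨ1p2
  have hexpc : exp c = Ψ 1 := by
    have h := hδK (Ψ 1 - 1) (lt_of_lt_of_le hΨ1εK (min_le_left _ _))
    rw [hcdef, h]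
    ring
  have hiso : Continuous (algebraMap ℚ_[p] K) :=
    (AddMonoidHomClass.isometry_of_norm _ (fun x => norm_algebraMap' K x)).continuous
  have hargnorm : ∀ z : ℤ_[p], ‖(algebraMap ℚ_[p] K (z:ℚ_[p])) * c‖ ≤ ((p:ℝ)⁻¹)^2 := by
    intro z
    rw [norm_mul, norm_algebraMap']
    calc ‖(z:ℚ_[p])‖ * ‖c‖ ≤ 1 * ‖c‖ := by
          apply mul_le_mul_of_nonneg_right ?_ (norm_nonneg c)
          rw [PadicInt.padic_norm_e_of_padicInt]
          exact PadicInt.norm_le_one z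
      _ = ‖c‖ := one_mul _
      _ ≤ _ := hcnorm
  have key : ∀ z : ℤ_[p], Ψ z = exp ((algebraMap ℚ_[p] K (z : ℚ_[p])) * c) := by
    have h1 : Continuous Ψ := hχ.comp (Upad_cont m0)
    have hargcont : Continuous (fun z : ℤ_[p] => (algebraMap ℚ_[p] K (z:ℚ_[p])) * c) :=
      (hiso.comp continuous_subtype_val).mul continuous_const
    have h2 : Continuous (fun z : ℤ_[p] => exp ((algebraMap ℚ_[p] K (z:ℚ_[p])) * c)) :=
      (continuousOn_exp (𝕂 := K) (𝔸 := K)).comp_continuous hargcont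
        (fun z => mem_ball_expS p K (hargnorm z))
    have hnat : ∀ n : ℕ, Ψ ((n : ℤ_[p])) = exp ((algebraMap ℚ_[p] K ((n : ℤ_[p]) : ℚ_[p])) * c) := by
      intro n
      induction n with
      | zero =>
        have hz0 : ((0 : ℕ) : ℤ_[p]) = 0 := Nat.cast_zero
        rw [hz0]
        have hL : Ψ 0 = 1 := by rw [hΨdef]; simp only []; rw [Upad_zero, map_one, Units.val_one]
        have hR : (algebraMap ℚ_[p] K ((0 : ℤ_[p]) : ℚ_[p])) * c = 0 := by
          simp
        rw [hL, hR, exp_zero]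
      | succ n ih =>
        have hcast : ((n+1 : ℕ) : ℤ_[p]) = (n : ℤ_[p]) + 1 := by push_cast; ring
        rw [hcast]
        have hL : Ψ ((n : ℤ_[p]) + 1) = Ψ (n : ℤ_[p]) * Ψ 1 := by
          rw [hΨdef]
          simp only []
          rw [Upad_hom, map_mul, Units.val_mul]
        have harg : (algebraMap ℚ_[p] K (((n : ℤ_[p]) + 1 : ℤ_[p]) : ℚ_[p])) * c
            = (algebraMap ℚ_[p] K ((n : ℤ_[p]) : ℚ_[p])) * c + c := by
          rw [PadicInt.coe_add, map_add]
          push_cast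
          ring
        rw [hL, harg, exp_add_small p K (hargnorm _) hcnorm, ih, hexpc]
    have heq := Continuous.ext_on PadicInt.denseRange_natCast h1 h2 ?_
    · exact fun z => congrFun heq z
    · rintro _ ⟨n, rfl⟩
      exact hnat n
  refine ⟨m0 + 1, c * (algebraMap ℚ_[p] K ((p:ℚ_[p]) ^ (m0 + 2)))⁻¹, ?_⟩
  intro x u hu
  set w : ℚ_[p] := (p:ℚ_[p]) ^ (m0+2) * (x:ℚ_[p]) with hwdef
  have hwnorm : ‖w‖ ≤ ((p:ℝ)⁻¹) ^ (m0+2) := padArg_norm _ _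
  have hwnorm2 : ‖w‖ ≤ ((p:ℝ)⁻¹) ^ 2 :=
    le_trans hwnorm (pow_le_pow_of_le_one hppos.le hplt1.le (by omega))
  have hwδp : ‖w‖ < δp := by
    calc ‖w‖ ≤ ((p:ℝ)⁻¹) ^ (m0+2) := hwnorm
      _ ≤ ((p:ℝ)⁻¹) ^ k2 :=
          pow_le_pow_of_le_one hppos.le hplt1.le (le_trans (le_max_right k1 k2) (by omega))
      _ < δp := hk2
  set t := plog1p w with htdef
  have htnorm : ‖t‖ ≤ ‖w‖ := norm_plog1p_le p ℚ_[p] hwnorm2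
  have hexp_t : exp t = 1 + w := hδp w hwδp
  have hpm_ne : ((p:ℚ_[p]) ^ (m0+2)) ≠ 0 := by
    apply pow_ne_zero
    exact_mod_cast hp'.out.ne_zero
  have hznorm : ‖t / (p:ℚ_[p]) ^ (m0+2)‖ ≤ 1 := by
    rw [norm_div, Padic.norm_p_pow, div_le_one (by positivity)]
    calc ‖t‖ ≤ ‖w‖ := htnorm
      _ ≤ ((p:ℝ)⁻¹)^(m0+2) := hwnorm
      _ = (p:ℝ) ^ (-((m0+2 : ℕ)) : ℤ) := by rw [zpow_neg, zpow_natCast, inv_pow]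
  set z : ℤ_[p] := ⟨t / (p:ℚ_[p]) ^ (m0+2), hznorm⟩ with hzdef
  have hzt : (p:ℚ_[p]) ^ (m0+2) * (z : ℚ_[p]) = t := by
    show (p:ℚ_[p]) ^ (m0+2) * (t / (p:ℚ_[p]) ^ (m0+2)) = t
    field_simp
  have hu2 : Upad p m0 z = u := by
    apply Units.ext
    apply Subtype.ext
    rw [Upad_val]
    have harg : (p:ℚ_[p]) ^ (2+m0) * (z:ℚ_[p]) = t := by
      rw [Nat.add_comm 2 m0]
      exact hzt
    rw [harg, hexp_t, hu]
    push_cast [hwdef]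
    ring
  rw [← hu2]
  have hkz : ((χ (Upad p m0 z) : Kˣ) : K) = exp ((algebraMap ℚ_[p] K (z:ℚ_[p])) * c) := key z
  rw [hkz]
  have hcoe : (((p:ℤ_[p]) ^ (m0 + 1 + 1) * x : ℤ_[p]) : ℚ_[p]) = w := by
    rw [hwdef]
    push_cast
    ring_nf
  rw [hcoe]
  have hplog : plog1p (algebraMap ℚ_[p] K w) = algebraMap ℚ_[p] K t := by
    rw [algebraMap_plog1p p K (lt_of_le_of_lt hwnorm2 (by
      calc ((p:ℝ)⁻¹)^2 < 1 := pow_lt_one₀ hppos.le hplt1 (by norm_num)))]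
  rw [hplog]
  congr 1
  have hne : algebraMap ℚ_[p] K ((p:ℚ_[p]) ^ (m0+2)) ≠ 0 := by
    intro h
    exact hpm_ne ((algebraMap ℚ_[p] K).injective (h.trans (map_zero _).symm))
  rw [← hzt, map_mul]
  rw [show c * ((algebraMap ℚ_[p] K) ((p:ℚ_[p]) ^ (m0+2)))⁻¹ *
      ((algebraMap ℚ_[p] K) ((p:ℚ_[p]) ^ (m0+2)) * (algebraMap ℚ_[p] K) (z:ℚ_[p]))
      = c * (algebraMap ℚ_[p] K) (z:ℚ_[p]) *
        (((algebraMap ℚ_[p] K) ((p:ℚ_[p]) ^ (m0+2)))⁻¹ * (algebraMap ℚ_[p] K) ((p:ℚ_[p]) ^ (m0+2)))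
      from by ring, inv_mul_cancel₀ hne, mul_one, mul_comm c ((algebraMap ℚ_[p] K) (z:ℚ_[p]))]
end
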